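/- Let λ̲ be a cup diagram with n cups. Then the assignment sending each cup with endpoints a<b to b+1/2 is a ∇-orientation of λ̲; moreover, if ν is any ∇-orientation of λ̲ with assigned values k_1 > k_2 > … > k_n, and m_1 > m_2 > … > m_n are the values assigned by the former (i.e. the right endpoints of the cups increased by 1/2, listed decreasingly), then k_i ≤ m_i for every 1 ≤ i ≤ n. -/

import Mathlib

/-- A rational number is a *half-integer*, i.e. of the form `k + 1/2` for an integer `k`. -/
def IsHalfInt (q : ℚ) : Prop := ∃ k : ℤ, q = (k : ℚ) + 1/2

/-- A *cup diagram* (the same notion is also used for cap diagrams): a finite set of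
arcs `(a, b)` of half-integers with `a < b` (the *left* and *right endpoints*), such that
all endpoints of all arcs are pairwise distinct, and every half-integer strictly between
the endpoints of an arc is an endpoint of an arc nested inside it. -/
structure ArcDiagram where
  arcs : Finset (ℚ × ℚ)
  half_left : ∀ c ∈ arcs, IsHalfInt c.1
  half_right : ∀ c ∈ arcs, IsHalfInt c.2
  lt : ∀ c ∈ arcs, c.1 < c.2
  distinct : ∀ c ∈ arcs, ∀ c' ∈ arcs, c ≠ c' →
    c.1 ≠ c'.1 ∧ c.1 ≠ c'.2 ∧ c.2 ≠ c'.1 ∧ c.2 ≠ c'.2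
  nested : ∀ c ∈ arcs, ∀ x : ℚ, IsHalfInt x → c.1 < x → x < c.2 →
    ∃ c' ∈ arcs, (x = c'.1 ∨ x = c'.2) ∧ c.1 ≤ c'.1 ∧ c'.2 ≤ c.2

/-- A `∇`-orientation of a cup diagram `lam`: it assigns to each cup with endpoints
`a < b` an integer equal to `a - 1/2` or `b + 1/2`, the assigned integers being pairwise
distinct. -/
def IsNablaOrientation (lam : ArcDiagram) (f : ℚ × ℚ → ℤ) : Prop :=
  (∀ c ∈ lam.arcs, (f c : ℚ) = c.1 - 1/2 ∨ (f c : ℚ) = c.2 + 1/2) ∧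
  (∀ c ∈ lam.arcs, ∀ c' ∈ lam.arcs, f c = f c' → c = c')

/-- The assignment sending each cup with endpoints `a < b` to `b + 1/2`. -/
def rightNabla : ℚ × ℚ → ℤ := fun c => ⌊c.2 + 1/2⌋

lemma rightNabla_eq (c : ℚ × ℚ) (h : IsHalfInt c.2) : (rightNabla c : ℚ) = c.2 + 1/2 := by
  obtain ⟨k, hk⟩ := h
  have : c.2 + 1/2 = ((k + 1 : ℤ) : ℚ) := by rw [hk]; push_cast; ring
  rw [rightNabla, this, Int.floor_intCast]

/-- For a cup diagram `lam` with `n` cups, the assignment sending each cup with endpoints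
`a < b` to `b + 1/2` is a `∇`-orientation; moreover, if `ν` is any `∇`-orientation of
`lam` with assigned values `k_1 > … > k_n` and `m_1 > … > m_n` are the values assigned by
the former, then `k_i ≤ m_i` for every `i`. -/
theorem rightNabla_isNablaOrientation_and_maximal (lam : ArcDiagram) (n : ℕ)
    (hn : lam.arcs.card = n) :
    IsNablaOrientation lam rightNabla ∧
    ∀ ν : ℚ × ℚ → ℤ, IsNablaOrientation lam ν →
      ∀ ks ms : List ℤ, ks.Pairwise (· > ·) → ms.Pairwise (· > ·) →
        (∀ x : ℤ, x ∈ ks ↔ x ∈ lam.arcs.image ν) →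
        (∀ x : ℤ, x ∈ ms ↔ x ∈ lam.arcs.image rightNabla) →
        ∀ (i : ℕ) (h1 : i < ks.length) (h2 : i < ms.length),
          ks.get ⟨i, h1⟩ ≤ ms.get ⟨i, h2⟩ := by
  have hinj_r : ∀ c ∈ lam.arcs, ∀ c' ∈ lam.arcs, rightNabla c = rightNabla c' → c = c' := by
    intro c hc c' hc' h
    by_contra hne
    have e1 := rightNabla_eq c (lam.half_right c hc)
    have e2 := rightNabla_eq c' (lam.half_right c' hc')
    have hq : (rightNabla c : ℚ) = (rightNabla c' : ℚ) := by exact_mod_cast h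
    have h2 : c.2 = c'.2 := by rw [e1, e2] at hq; linarith
    exact (lam.distinct c hc c' hc' hne).2.2.2 h2
  refine ⟨⟨fun c hc => Or.inr (rightNabla_eq c (lam.half_right c hc)), hinj_r⟩, ?_⟩
  intro ν hν ks ms hks hms hmemk hmemm i h1 h2
  set t := ks.get ⟨i, h1⟩ with ht
  -- pointwise bound ν c ≤ rightNabla c
  have hle : ∀ c ∈ lam.arcs, ν c ≤ rightNabla c := by
    intro c hc
    have hr := rightNabla_eq c (lam.half_right c hc)
    have hlt := lam.lt c hc
    have : (ν c : ℚ) ≤ (rightNabla c : ℚ) := by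
      rcases hν.1 c hc with h | h <;> rw [h, hr] <;> linarith
    exact_mod_cast this
  classical
  set B := lam.arcs.filter (fun c => t ≤ ν c) with hB
  set A := ms.toFinset.filter (fun x => t ≤ x) with hA
  have hks_nodup : ks.Nodup := hks.nodup
  -- the first i+1 entries of ks land in B.image ν
  have hsub1 : (ks.take (i+1)).toFinset ⊆ B.image ν := by
    intro x hx
    rw [List.mem_toFinset] at hx
    obtain ⟨j, hj, hjx⟩ := List.getElem_of_mem hx
    have hjlen : j < i + 1 := lt_of_lt_of_le hj (by simp [List.length_take])
    rw [List.getElem_take] at hjx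
    have htx : t ≤ x := by
      rcases lt_or_eq_of_le (Nat.lt_succ_iff.mp hjlen) with hji | hji
      · have := hks.rel_get_of_lt (l := ks) (a := ⟨j, lt_trans hji h1⟩) (b := ⟨i, h1⟩) hji
        simp only [List.get_eq_getElem] at this
        rw [hjx] at this
        exact le_of_lt this
      · subst hji
        rw [ht, List.get_eq_getElem, hjx]
    have hxks : x ∈ ks := hjx ▸ List.getElem_mem _
    have hximg := (hmemk x).1 hxks
    rw [Finset.mem_image] at hximg
    obtain ⟨c, hc, hcx⟩ := hximg
    refine Finset.mem_image.2 ⟨c, Finset.mem_filter.2 ⟨hc, ?_⟩, hcx⟩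
    rw [hcx]; exact htx
  have hcard1 : i + 1 ≤ ((ks.take (i+1)).toFinset).card := by
    rw [List.toFinset_card_of_nodup (hks_nodup.sublist (List.take_sublist _ _))]
    simp [List.length_take]
    omega
  have hcard2 : ((ks.take (i+1)).toFinset).card ≤ (B.image ν).card :=
    Finset.card_le_card hsub1
  have hcard3 : (B.image ν).card ≤ B.card := Finset.card_image_le
  -- B injects into A via rightNabla
  have hcard4 : B.card ≤ A.card := by
    apply Finset.card_le_card_of_injOn rightNabla
    · intro c hc
      rw [Finset.mem_coe, hB, Finset.mem_filter] at hc
      rw [Finset.mem_coe, hA, Finset.mem_filter, List.mem_toFinset]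
      refine ⟨(hmemm _).2 (Finset.mem_image_of_mem _ hc.1), le_trans hc.2 (hle c hc.1)⟩
    · intro c hc c' hc' h
      rw [hB, Finset.coe_filter, Set.mem_setOf_eq] at hc hc'
      exact hinj_r c hc.1 c' hc'.1 h
  have hcardA : i + 1 ≤ A.card := by omega
  -- conclude ms.get i ≥ t
  by_contra hcon
  push_neg at hcon
  have hsub2 : A ⊆ (ms.take i).toFinset := by
    intro x hx
    rw [hA, Finset.mem_filter, List.mem_toFinset] at hx
    obtain ⟨hxms, htx⟩ := hx
    obtain ⟨j, hj, hjx⟩ := List.getElem_of_mem hxms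
    have hji : j < i := by
      by_contra hji
      push_neg at hji
      rcases lt_or_eq_of_le hji with hij | hij
      · have hgt := hms.rel_get_of_lt (l := ms) (a := ⟨i, h2⟩) (b := ⟨j, hj⟩) hij
        simp only [List.get_eq_getElem] at hgt hcon
        rw [hjx] at hgt
        omega
      · subst hij
        rw [List.get_eq_getElem, hjx] at hcon
        exact absurd htx (not_le.2 hcon)
    rw [List.mem_toFinset]
    have hjt : j < (ms.take i).length := by simp [List.length_take]; omega
    have : (ms.take i)[j] = x := by rw [List.getElem_take]; exact hjx
    exact this ▸ List.getElem_mem hjt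
  have : A.card ≤ i := le_trans (Finset.card_le_card hsub2)
    (le_trans (List.toFinset_card_le _) (by simp [List.length_take]))
  omega
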